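/- For every function f : ℕ → ℕ, every dimension d ≥ 1, every number of colors k ≥ 1 and every a ∈ ℕ, there exists R ∈ ℕ such that for every coloring C of the d-element subsets of {a, a+1, ..., R} with k colors there exists a C-homogeneous set H with |H| ≥ f(min H). -/
import Mathlib


/-- `H` is homogeneous for the colouring `C` of `d`-element finite sets:
`C` is constant on the `d`-element subsets of `H`. -/
def HomogF (k d : ℕ) (C : Finset ℕ → Fin k) (H : Finset ℕ) : Prop :=
  ∃ c : Fin k, ∀ s : Finset ℕ, s ⊆ H → s.card = d → C s = c

/-- Homogeneity for a (possibly infinite) set `H ⊆ ℕ`. -/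
def HomogS (k d : ℕ) (C : Finset ℕ → Fin k) (H : Set ℕ) : Prop :=
  ∃ c : Fin k, ∀ s : Finset ℕ, ↑s ⊆ H → s.card = d → C s = c

/-- `F` is asymptotically stable: on every increasing chain of finite sets
the value of `F` eventually stabilises. -/
def AsympStable (F : Finset ℕ → ℕ) : Prop :=
  ∀ X : ℕ → Finset ℕ, (∀ i, X i ⊆ X (i + 1)) →
    ∃ i, ∀ j, i ≤ j → F (X j) = F (X i)


theorem infRamsey (k : ℕ) (hk : 1 ≤ k) :
    ∀ d : ℕ, ∀ C : Finset ℕ → Fin k, ∀ S : Set ℕ, S.Infinite →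
    ∃ H : Set ℕ, H ⊆ S ∧ H.Infinite ∧
      ∃ c : Fin k, ∀ s : Finset ℕ, ↑s ⊆ H → s.card = d → C s = c := by
  intro d
  induction d with
  | zero =>
    intro C S hS
    exact ⟨S, subset_rfl, hS, C ∅, fun s _ hs => by rw [Finset.card_eq_zero.mp hs]⟩
  | succ d ih =>
    intro C S hS
    have step : ∀ T : Set ℕ, T.Infinite → ∃ a, a ∈ T ∧ ∃ c : Fin k, ∃ T' : Set ℕ,
        T' ⊆ T \ {a} ∧ T'.Infinite ∧
        ∀ t : Finset ℕ, ↑t ⊆ T' → t.card = d → C (insert a t) = c := by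
      intro T hT
      obtain ⟨a, ha⟩ := hT.nonempty
      obtain ⟨H, hH1, hH2, c, hc⟩ := ih (fun t => C (insert a t)) (T \ {a})
        (hT.diff (Set.finite_singleton a))
      exact ⟨a, ha, c, H, hH1, hH2, fun t ht htd => hc t ht htd⟩
    choose A hA cc T' hsub hinf hhom using step
    let F : {T : Set ℕ // T.Infinite} → {T : Set ℕ // T.Infinite} :=
      fun p => ⟨T' p.1 p.2, hinf p.1 p.2⟩
    let g : ℕ → {T : Set ℕ // T.Infinite} := fun n => F^[n] ⟨S, hS⟩
    have hg : ∀ n, g (n + 1) = F (g n) := fun n => Function.iterate_succ_apply' F n _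
    let b : ℕ → ℕ := fun n => A (g n).1 (g n).2
    have hb : ∀ n, b n ∈ (g n).1 := fun n => hA (g n).1 (g n).2
    have hstep : ∀ n, (g (n + 1)).1 ⊆ (g n).1 \ {b n} := by
      intro n
      rw [hg n]
      exact hsub (g n).1 (g n).2
    have hmono : ∀ n m, n ≤ m → (g m).1 ⊆ (g n).1 := by
      intro n m hnm
      induction m with
      | zero => simp_all
      | succ m ihm =>
        rcases Nat.lt_or_ge n (m + 1) with h | h
        · exact ((hstep m).trans Set.diff_subset).trans (ihm (Nat.lt_succ_iff.mp h))
        · have : n = m + 1 := le_antisymm hnm h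
          subst this; exact subset_rfl
    have hbmem : ∀ n m, n < m → b m ∈ (g (n + 1)).1 := by
      intro n m h
      exact hmono (n + 1) m h (hb m)
    have hbinj : Function.Injective b := by
      intro n m hnm
      by_contra hne
      rcases Nat.lt_or_ge n m with h | h
      · exact ((hstep n) (hbmem n m h)).2 (by simp [hnm])
      · have h' : m < n := lt_of_le_of_ne h (Ne.symm hne)
        exact ((hstep m) (hbmem m n h')).2 (by simp [hnm])
    obtain ⟨c₀, hc₀⟩ := Finite.exists_infinite_fiber (fun n => cc (g n).1 (g n).2)
    have hI : Set.Infinite {n | cc (g n).1 (g n).2 = c₀} := by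
      rw [Set.infinite_coe_iff] at hc₀
      exact hc₀
    refine ⟨b '' {n | cc (g n).1 (g n).2 = c₀}, ?_, hI.image hbinj.injOn, c₀, ?_⟩
    · rintro x ⟨n, _, rfl⟩
      exact hmono 0 n (Nat.zero_le n) (hb n)
    · intro s hs hcard
      have hall : ∀ x ∈ s, ∃ n, cc (g n).1 (g n).2 = c₀ ∧ b n = x := by
        intro x hx
        obtain ⟨n, hn, hbn⟩ := hs hx
        exact ⟨n, hn, hbn⟩
      choose idx hidx1 hidx2 using hall
      let J : Finset ℕ := s.attach.image (fun x => idx x.1 x.2)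
      have hJim : J.image b = s := by
        ext y
        simp only [J, Finset.mem_image, Finset.mem_attach, true_and, Finset.mem_image]
        constructor
        · rintro ⟨n, ⟨⟨x, hx⟩, rfl⟩, rfl⟩
          rw [hidx2 x hx]; exact hx
        · intro hy
          exact ⟨idx y hy, ⟨⟨y, hy⟩, rfl⟩, hidx2 y hy⟩
      have hJcard : J.card = d + 1 := by
        rw [← hcard, ← hJim, Finset.card_image_of_injective J hbinj]
      have hJne : J.Nonempty := Finset.card_pos.mp (by omega)
      set n₀ := J.min' hJne with hn₀
      have hn₀J : n₀ ∈ J := J.min'_mem hJne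
      have hIcc : ∀ m ∈ J, cc (g m).1 (g m).2 = c₀ := by
        intro m hm
        simp only [J, Finset.mem_image, Finset.mem_attach, true_and] at hm
        obtain ⟨⟨x, hx⟩, rfl⟩ := hm
        exact hidx1 x hx
      set t : Finset ℕ := (J.erase n₀).image b with ht
      have hseq : s = insert (b n₀) t := by
        rw [ht, ← Finset.image_insert, Finset.insert_erase hn₀J, hJim]
      have htsub : ↑t ⊆ (g (n₀ + 1)).1 := by
        intro x hx
        simp only [ht, Finset.coe_image, Set.mem_image, Finset.mem_coe,
          Finset.mem_erase] at hx
        obtain ⟨m, ⟨hmne, hmJ⟩, rfl⟩ := hx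
        exact hbmem n₀ m (lt_of_le_of_ne (J.min'_le m hmJ) (Ne.symm hmne))
      have htcard : t.card = d := by
        rw [ht, Finset.card_image_of_injective _ hbinj, Finset.card_erase_of_mem hn₀J,
          hJcard]
        omega
      calc C s = C (insert (b n₀) t) := by rw [hseq]
        _ = cc (g n₀).1 (g n₀).2 := by
            rw [hg n₀] at htsub
            exact hhom (g n₀).1 (g n₀).2 t htsub htcard
        _ = c₀ := hIcc n₀ hn₀J


theorem ultConst {k : ℕ} (hk : 1 ≤ k) (U : Ultrafilter ℕ) (g : ℕ → Fin k) :
    ∃ c, {R | g R = c} ∈ U := by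
  by_contra h
  push_neg at h
  have : Nonempty (Fin k) := ⟨⟨0, hk⟩⟩
  have h' : ∀ c : Fin k, {R | g R = c}ᶜ ∈ U := fun c =>
    Ultrafilter.compl_mem_iff_notMem.mpr (h c)
  have hmem : ⋂ c : Fin k, {R | g R = c}ᶜ ∈ U := Filter.iInter_mem.mpr h'
  obtain ⟨R, hR⟩ := Ultrafilter.nonempty_of_mem hmem
  simp only [Set.mem_iInter, Set.mem_compl_iff, Set.mem_setOf_eq] at hR
  exact hR (g R) rfl


theorem parametrized_paris_harrington
    (f : ℕ → ℕ) (d k a : ℕ) (hd : 1 ≤ d) (hk : 1 ≤ k) :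
    ∃ R : ℕ, ∀ C : Finset ℕ → Fin k,
      ∃ H : Finset ℕ, ↑H ⊆ Finset.Icc a R ∧ HomogF k d C H ∧
        ∃ hH : H.Nonempty, f (H.min' hH) ≤ H.card := by
  by_contra hcon
  push_neg at hcon
  choose CC hCC using hcon
  set U : Ultrafilter ℕ := Filter.hyperfilter ℕ with hU
  choose D hD using fun s => ultConst hk U (fun R => CC R s)
  obtain ⟨H', hH'sub, hH'inf, c, hc⟩ := infRamsey k hk d D (Set.Ici a) (Set.Ici_infinite a)
  obtain ⟨m, hm⟩ := hH'inf.nonempty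
  have hinf2 : (H' ∩ Set.Ici m).Infinite := by
    have : H' ∩ Set.Ici m = H' \ Set.Iio m := by
      rw [Set.diff_eq, Set.compl_Iio]
    rw [this]
    exact hH'inf.diff (Set.finite_Iio m)
  obtain ⟨t, htsub, htcard⟩ := hinf2.exists_subset_card_eq (f m + 1)
  set G : Finset ℕ := insert m t with hG
  have hGsub' : ↑G ⊆ H' ∩ Set.Ici m := by
    rw [hG, Finset.coe_insert]
    exact Set.insert_subset ⟨hm, le_refl m⟩ htsub
  have hGne : G.Nonempty := ⟨m, Finset.mem_insert_self m t⟩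
  have hGmin : G.min' hGne = m := by
    apply le_antisymm
    · exact Finset.min'_le G m (Finset.mem_insert_self m t)
    · exact Finset.le_min' G hGne m fun y hy => (hGsub' hy).2
  have hGcard : f m + 1 ≤ G.card := by
    rw [← htcard]
    exact Finset.card_le_card (Finset.subset_insert m t)
  have hE : ∀ᶠ R in (U : Filter ℕ), ∀ s ∈ G.powerset, CC R s = D s := by
    rw [Filter.eventually_all_finset]
    intro s _
    exact hD s
  have h2 : ∀ᶠ R in (U : Filter ℕ), G.max' hGne ≤ R :=
    Nat.hyperfilter_le_atTop (Filter.eventually_ge_atTop _)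
  obtain ⟨R, hR1, hR2⟩ := (hE.and h2).exists
  have hsubIcc : ↑G ⊆ Finset.Icc a R := by
    intro x hx
    have hx' := hGsub' hx
    have hax : a ≤ x := hH'sub hx'.1
    have hxR : x ≤ R := le_trans (Finset.le_max' G x hx) hR2
    simp [Finset.mem_Icc]
    exact ⟨hax, hxR⟩
  have hhom : HomogF k d (CC R) G := by
    refine ⟨c, fun s hs hcard => ?_⟩
    rw [hR1 s (Finset.mem_powerset.mpr hs)]
    exact hc s (fun x hx => (hGsub' (hs hx)).1) hcard
  have := hCC R G hsubIcc hhom hGne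
  rw [hGmin] at this
  omega
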